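/- In a minimal-counterexample analysis: if G is {3K₁, K₁+C₄}-free with non-adjacent vertices v, w, v of maximum degree Δ, and with the sets A₁, A₂, B₁₁, B₁₂, B₂ as defined, then Δ ≤ 2ω − 2 − |B₂|; in particular Δ(G) ≤ 2ω(G) − 2 for any {3K₁, K₁+C₄}-free non-complete graph where the maximum degree vertex has a non-neighbor. -/

import Mathlib

open SimpleGraph

/-- `G` has no independent set of size 3: among any 3 distinct vertices, some two are adjacent. -/
def ThreeK1Free {V : Type*} (G : SimpleGraph V) : Prop :=
  ∀ a b c : V, a ≠ b → a ≠ c → b ≠ c → G.Adj a b ∨ G.Adj a c ∨ G.Adj b c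

/-- The wheel `K₁ + C₄`: hub `0` joined to the 4-cycle `1-2-3-4-1`. -/
def wheel4 : SimpleGraph (Fin 5) :=
  SimpleGraph.fromRel (fun i j =>
    i = 0 ∨ (i = 1 ∧ j = 2) ∨ (i = 2 ∧ j = 3) ∨ (i = 3 ∧ j = 4) ∨ (i = 4 ∧ j = 1))

/-- `G` has no induced subgraph isomorphic to `K₁ + C₄` (graph embeddings are induced). -/
def K1C4Free {V : Type*} (G : SimpleGraph V) : Prop :=
  IsEmpty (wheel4 ↪g G)

lemma wheel_contra {V : Type*} {G : SimpleGraph V} (h4 : K1C4Free G)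
    {h x1 x2 x3 x4 : V} (hbd : x1 ≠ x3) (hce : x2 ≠ x4)
    (ah1 : G.Adj h x1) (ah2 : G.Adj h x2) (ah3 : G.Adj h x3) (ah4 : G.Adj h x4)
    (e12 : G.Adj x1 x2) (e23 : G.Adj x2 x3) (e34 : G.Adj x3 x4) (e41 : G.Adj x4 x1)
    (n13 : ¬ G.Adj x1 x3) (n24 : ¬ G.Adj x2 x4) : False := by
  have d1 := G.ne_of_adj ah1
  have d2 := G.ne_of_adj ah2
  have d3 := G.ne_of_adj ah3
  have d4 := G.ne_of_adj ah4
  have d12 := G.ne_of_adj e12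
  have d23 := G.ne_of_adj e23
  have d34 := G.ne_of_adj e34
  have d41 := G.ne_of_adj e41
  have sah1 := ah1.symm; have sah2 := ah2.symm; have sah3 := ah3.symm
  have sah4 := ah4.symm; have se12 := e12.symm; have se23 := e23.symm
  have se34 := e34.symm; have se41 := e41.symm
  have n31 : ¬ G.Adj x3 x1 := fun hh => n13 hh.symm
  have n42 : ¬ G.Adj x4 x2 := fun hh => n24 hh.symm
  have f : wheel4 ↪g G := by
    refine ⟨⟨![h, x1, x2, x3, x4], ?_⟩, ?_⟩
    · intro i j hij
      fin_cases i <;> fin_cases j <;> simp_all <;>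
        first
          | rfl
          | (exact absurd hij.symm (by assumption))
          | (exact absurd hij (by assumption))
    · intro i j
      show G.Adj (![h, x1, x2, x3, x4] i) (![h, x1, x2, x3, x4] j) ↔ wheel4.Adj i j
      fin_cases i <;> fin_cases j <;>
        simp_all [wheel4, SimpleGraph.fromRel_adj, G.irrefl, Fin.ext_iff, -Fin.val_eq_zero_iff] <;> decide
  exact h4.false f

lemma pairwise_ncard_le_cliqueNum {V : Type*} [Fintype V] (G : SimpleGraph V)
    (S : Set V) (h : S.Pairwise G.Adj) : S.ncard ≤ G.cliqueNum := by
  classical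
  have hfin : S.Finite := S.toFinite
  have hc : G.IsClique (hfin.toFinset : Finset V) := by
    rw [SimpleGraph.isClique_iff, Set.Finite.coe_toFinset]; exact h
  rw [Set.ncard_eq_toFinset_card S hfin]
  exact hc.card_le_cliqueNum

theorem stmt10 {V : Type*} [Fintype V] (G : SimpleGraph V) [DecidableRel G.Adj]
    (h3 : ThreeK1Free G) (h4 : K1C4Free G)
    (v w : V) (hmaxdeg : ∀ u : V, G.degree u ≤ G.degree v)
    (hvw : v ≠ w) (hnadj : ¬ G.Adj v w)
    (A A₁ A₂ B B₁₁ B₁₂ B₂ : Set V)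
    (hA : A = G.neighborSet v ∩ G.neighborSet w)
    (hA₁sub : A₁ ⊆ A) (hA₁clq : A₁.Pairwise G.Adj)
    (hA₁max : ∀ S : Set V, A₁ ⊆ S → S ⊆ A → S.Pairwise G.Adj → S = A₁)
    (hA₂ : A₂ = A \ A₁)
    (hB : B = G.neighborSet v \ (A ∪ {w}))
    (hB₁₁ : B₁₁ = {b ∈ B | ∃ a ∈ A₂, ¬ G.Adj b a})
    (hB₁₂ : B₁₂ = {b ∈ B | ∃ a ∈ A₁, ¬ G.Adj b a})
    (hB₂ : B₂ = B \ (B₁₁ ∪ B₁₂)) :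
    G.degree v + B₂.ncard + 2 ≤ 2 * G.cliqueNum ∧
    G.degree v ≤ 2 * G.cliqueNum - 2 := by
  classical
  -- basic membership facts
  have hAv : ∀ a ∈ A, G.Adj v a := by intro a ha; rw [hA] at ha; exact ha.1
  have hAw : ∀ a ∈ A, G.Adj w a := by intro a ha; rw [hA] at ha; exact ha.2
  have hBv : ∀ b ∈ B, G.Adj v b := by intro b hb; rw [hB] at hb; exact hb.1
  have hBnA : ∀ b ∈ B, b ∉ A := by
    intro b hb; rw [hB] at hb; exact fun h => hb.2 (Or.inl h)
  have hBnw : ∀ b ∈ B, b ≠ w := by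
    intro b hb; rw [hB] at hb; exact fun h => hb.2 (Or.inr h)
  have hBw : ∀ b ∈ B, ¬ G.Adj w b := by
    intro b hb hadj
    exact hBnA b hb (by rw [hA]; exact ⟨hBv b hb, hadj⟩)
  -- B is a clique
  have hBclq : B.Pairwise G.Adj := by
    intro b hb b' hb' hne
    rcases h3 b b' w hne (hBnw b hb) (hBnw b' hb') with h | h | h
    · exact h
    · exact absurd h.symm (hBw b hb)
    · exact absurd h.symm (hBw b' hb')
  have hA₂subA : A₂ ⊆ A := by rw [hA₂]; exact Set.diff_subset
  have hA₂nA₁ : ∀ a ∈ A₂, a ∉ A₁ := by intro a ha; rw [hA₂] at ha; exact ha.2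
  -- every element of A₂ is nonadjacent to every element of A₁
  have hX : ∀ a ∈ A₂, ∀ p ∈ A₁, ¬ G.Adj a p := by
    intro a ha p hp hap
    have haA : a ∈ A := hA₂subA ha
    obtain ⟨p₀, hp₀, hnap₀⟩ : ∃ p₀ ∈ A₁, ¬ G.Adj a p₀ := by
      by_contra hcon
      push_neg at hcon
      have : insert a A₁ = A₁ := by
        apply hA₁max (insert a A₁) (Set.subset_insert a A₁)
          (Set.insert_subset haA hA₁sub)
        haveI := G.symm
        apply Set.Pairwise.insert_of_symmetric hA₁clq
        intro b hb _
        exact hcon b hb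
      exact (hA₂nA₁ a ha) (this ▸ Set.mem_insert a A₁)
    have hpp₀ : p ≠ p₀ := fun h => hnap₀ (h ▸ hap)
    have hp₀A : p₀ ∈ A := hA₁sub hp₀
    have hpA : p ∈ A := hA₁sub hp
    -- wheel: hub p, cycle a - v - p₀ - w - a
    have hav : a ≠ v := fun h => G.irrefl (h ▸ hAv a haA)
    have hp₀w : p₀ ≠ w := fun h => G.irrefl (h ▸ hAw p₀ hp₀A)
    have hap₀ne : a ≠ p₀ := fun h => hA₂nA₁ a ha (h ▸ hp₀)
    exact wheel_contra h4 hap₀ne hvw hap.symm (hAv p hpA).symm (hA₁clq hp hp₀ hpp₀)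
      (hAw p hpA).symm (hAv a haA).symm (hAv p₀ hp₀A) (hAw p₀ hp₀A).symm (hAw a haA)
      hnap₀ hnadj
  -- A₂ is a clique
  have hA₂clq : A₂.Pairwise G.Adj := by
    intro a ha a' ha' hne
    by_contra hnaa'
    -- A₁ is nonempty (else A = ∅, contradicting a ∈ A)
    obtain ⟨p, hp⟩ : A₁.Nonempty := by
      by_contra hemp
      rw [Set.not_nonempty_iff_eq_empty] at hemp
      have : ({a} : Set V) = A₁ :=
        hA₁max {a} (by rw [hemp]; exact Set.empty_subset _)
          (Set.singleton_subset_iff.mpr (hA₂subA ha)) (Set.pairwise_singleton a G.Adj)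
      rw [hemp] at this
      exact (Set.singleton_ne_empty a) this
    have hap : a ≠ p := fun h => hA₂nA₁ a ha (h ▸ hp)
    have ha'p : a' ≠ p := fun h => hA₂nA₁ a' ha' (h ▸ hp)
    rcases h3 a a' p hne hap ha'p with h | h | h
    · exact hnaa' h
    · exact hX a ha p hp h
    · exact hX a' ha' p hp h
  -- B₁₁ is complete to A₁, B₁₂ is complete to A₂
  have hB₁₁A₁ : ∀ b ∈ B₁₁, ∀ p ∈ A₁, G.Adj b p := by
    intro b hb p hp
    rw [hB₁₁] at hb
    obtain ⟨hbB, a, haA₂, hnba⟩ := hb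
    by_contra hnbp
    have hbp : b ≠ p := fun h => hBnA b hbB (h ▸ hA₁sub hp)
    have hba : b ≠ a := fun h => hBnA b hbB (h ▸ hA₂subA haA₂)
    have hpa : p ≠ a := fun h => hA₂nA₁ a haA₂ (h ▸ hp)
    rcases h3 b p a hbp hba hpa with h | h | h
    · exact hnbp h
    · exact hnba h
    · exact hX a haA₂ p hp h.symm
  have hB₁₂A₂ : ∀ b ∈ B₁₂, ∀ a ∈ A₂, G.Adj b a := by
    intro b hb a ha
    rw [hB₁₂] at hb
    obtain ⟨hbB, p, hpA₁, hnbp⟩ := hb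
    by_contra hnba
    have hbp : b ≠ p := fun h => hBnA b hbB (h ▸ hA₁sub hpA₁)
    have hba : b ≠ a := fun h => hBnA b hbB (h ▸ hA₂subA ha)
    have hpa : p ≠ a := fun h => hA₂nA₁ a ha (h ▸ hpA₁)
    rcases h3 b p a hbp hba hpa with h | h | h
    · exact hnbp h
    · exact hnba h
    · exact hX a ha p hpA₁ h.symm
  -- B₂ is complete to A
  have hB₂A₁ : ∀ b ∈ B₂, ∀ p ∈ A₁, G.Adj b p := by
    intro b hb p hp
    rw [hB₂] at hb
    by_contra hn
    exact hb.2 (Or.inr (by rw [hB₁₂]; exact ⟨hb.1, p, hp, hn⟩))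
  have hB₂A₂ : ∀ b ∈ B₂, ∀ a ∈ A₂, G.Adj b a := by
    intro b hb a ha
    rw [hB₂] at hb
    by_contra hn
    exact hb.2 (Or.inl (by rw [hB₁₁]; exact ⟨hb.1, a, ha, hn⟩))
  have hB₁₁B : B₁₁ ⊆ B := by rw [hB₁₁]; exact Set.sep_subset _ _
  have hB₁₂B : B₁₂ ⊆ B := by rw [hB₁₂]; exact Set.sep_subset _ _
  have hB₂B : B₂ ⊆ B := by rw [hB₂]; exact Set.diff_subset
  -- the two cliques
  set S₁ : Set V := A₁ ∪ (B₁₁ ∪ B₂) with hS₁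
  set S₂ : Set V := A₂ ∪ (B₁₂ ∪ B₂) with hS₂
  have hS₁N : S₁ ⊆ G.neighborSet v := by
    intro x hx
    rcases hx with h | h | h
    · exact hAv x (hA₁sub h)
    · exact hBv x (hB₁₁B h)
    · exact hBv x (hB₂B h)
  have hS₂N : S₂ ⊆ G.neighborSet v := by
    intro x hx
    rcases hx with h | h | h
    · exact hAv x (hA₂subA h)
    · exact hBv x (hB₁₂B h)
    · exact hBv x (hB₂B h)
  have hS₁clq : S₁.Pairwise G.Adj := by
    intro x hx y hy hne
    rcases hx with hx | hx <;> rcases hy with hy | hy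
    · exact hA₁clq hx hy hne
    · rcases hy with hy | hy
      · exact (hB₁₁A₁ y hy x hx).symm
      · exact (hB₂A₁ y hy x hx).symm
    · rcases hx with hx | hx
      · exact hB₁₁A₁ x hx y hy
      · exact hB₂A₁ x hx y hy
    · have hxB : x ∈ B := by rcases hx with h | h; exacts [hB₁₁B h, hB₂B h]
      have hyB : y ∈ B := by rcases hy with h | h; exacts [hB₁₁B h, hB₂B h]
      exact hBclq hxB hyB hne
  have hS₂clq : S₂.Pairwise G.Adj := by
    intro x hx y hy hne
    rcases hx with hx | hx <;> rcases hy with hy | hy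
    · exact hA₂clq hx hy hne
    · rcases hy with hy | hy
      · exact (hB₁₂A₂ y hy x hx).symm
      · exact (hB₂A₂ y hy x hx).symm
    · rcases hx with hx | hx
      · exact hB₁₂A₂ x hx y hy
      · exact hB₂A₂ x hx y hy
    · have hxB : x ∈ B := by rcases hx with h | h; exacts [hB₁₂B h, hB₂B h]
      have hyB : y ∈ B := by rcases hy with h | h; exacts [hB₁₂B h, hB₂B h]
      exact hBclq hxB hyB hne
  have hvS₁ : v ∉ S₁ := fun h => G.irrefl (hS₁N h)
  have hvS₂ : v ∉ S₂ := fun h => G.irrefl (hS₂N h)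
  have hC₁ : (insert v S₁).Pairwise G.Adj := by
    haveI := G.symm
    rw [Set.pairwise_insert_of_symmetric]
    exact ⟨hS₁clq, fun b hb _ => hS₁N hb⟩
  have hC₂ : (insert v S₂).Pairwise G.Adj := by
    haveI := G.symm
    rw [Set.pairwise_insert_of_symmetric]
    exact ⟨hS₂clq, fun b hb _ => hS₂N hb⟩
  have hω₁ : (insert v S₁).ncard ≤ G.cliqueNum := pairwise_ncard_le_cliqueNum G _ hC₁
  have hω₂ : (insert v S₂).ncard ≤ G.cliqueNum := pairwise_ncard_le_cliqueNum G _ hC₂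
  -- disjointness facts
  have hdisjAB : Disjoint A B := Set.disjoint_right.mpr hBnA
  have hB₁₁B₁₂ : Disjoint B₁₁ B₁₂ := by
    rw [Set.disjoint_left]
    intro b hb1 hb2
    rw [hB₁₁] at hb1
    obtain ⟨hbB, a, haA₂, hnba⟩ := hb1
    rw [hB₁₂] at hb2
    obtain ⟨_, p, hpA₁, hnbp⟩ := hb2
    have hba : b ≠ a := fun h => hBnA b hbB (h ▸ hA₂subA haA₂)
    have hbp : b ≠ p := fun h => hBnA b hbB (h ▸ hA₁sub hpA₁)
    have hap : a ≠ p := fun h => hA₂nA₁ a haA₂ (h ▸ hpA₁)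
    rcases h3 b a p hba hbp hap with h | h | h
    · exact hnba h
    · exact hnbp h
    · exact hX a haA₂ p hpA₁ h
  have hB₂dis : Disjoint (B₁₁ ∪ B₁₂) B₂ := by
    rw [Set.disjoint_right, hB₂]
    exact fun b hb => hb.2
  have hdisjA₁A₂ : Disjoint A₁ A₂ := Set.disjoint_right.mpr hA₂nA₁
  -- cardinalities
  have hcard₁ : (insert v S₁).ncard = A₁.ncard + B₁₁.ncard + B₂.ncard + 1 := by
    rw [Set.ncard_insert_of_notMem hvS₁, hS₁,
      Set.ncard_union_eq (Set.disjoint_of_subset hA₁sub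
        (Set.union_subset hB₁₁B hB₂B) hdisjAB),
      Set.ncard_union_eq (Set.disjoint_of_subset Set.subset_union_left
        (le_refl B₂) hB₂dis)]
    ring
  have hcard₂ : (insert v S₂).ncard = A₂.ncard + B₁₂.ncard + B₂.ncard + 1 := by
    rw [Set.ncard_insert_of_notMem hvS₂, hS₂,
      Set.ncard_union_eq (Set.disjoint_of_subset hA₂subA
        (Set.union_subset hB₁₂B hB₂B) hdisjAB),
      Set.ncard_union_eq (Set.disjoint_of_subset Set.subset_union_right
        (le_refl B₂) hB₂dis)]
    ring
  -- degree decomposition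
  have hNv : G.neighborSet v = A ∪ B := by
    ext x
    constructor
    · intro hx
      by_cases hxA : x ∈ A
      · exact Or.inl hxA
      · refine Or.inr ?_
        rw [hB]
        refine ⟨hx, ?_⟩
        rintro (h | h)
        · exact hxA h
        · rw [Set.mem_singleton_iff] at h
          exact hnadj (h ▸ hx)
    · rintro (hx | hx)
      · exact hAv x hx
      · exact hBv x hx
  have hAsplit : A = A₁ ∪ A₂ := by
    rw [hA₂]
    rw [Set.union_diff_cancel' (le_refl A₁) hA₁sub]
  have hBsplit : B = (B₁₁ ∪ B₁₂) ∪ B₂ := by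
    rw [hB₂, Set.union_diff_cancel (Set.union_subset hB₁₁B hB₁₂B)]
  have hdeg : G.degree v = A₁.ncard + A₂.ncard + (B₁₁.ncard + B₁₂.ncard) + B₂.ncard := by
    have : G.degree v = (G.neighborSet v).ncard := by
      rw [Set.ncard_eq_toFinset_card' , ← SimpleGraph.neighborFinset_def]
      rfl
    rw [this, hNv, Set.ncard_union_eq (by rw [hAsplit, hBsplit] at hdisjAB ⊢; exact hdisjAB),
      hAsplit, hBsplit, Set.ncard_union_eq hdisjA₁A₂, Set.ncard_union_eq hB₂dis,
      Set.ncard_union_eq hB₁₁B₁₂]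
    ring
  have hmain : G.degree v + B₂.ncard + 2 ≤ 2 * G.cliqueNum := by
    have := add_le_add hω₁ hω₂
    rw [hcard₁, hcard₂] at this
    omega
  exact ⟨hmain, by omega⟩
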